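/- There exist constants c > 0 and C > 0 (depending only on k and α) such that the Fourier coefficients a_j = (2π)^{−1/2} ∫_{−π}^{π} Φ̂_k(ξ) e^{ijξ} dξ satisfy |a_j| ≤ C e^{−c|j|} for all j ∈ ℤ. -/

import Mathlib

open MeasureTheory Filter
open scoped ENNReal

noncomputable def S (α : ℝ) (k : ℕ) (ξ : ℝ) : ℝ :=
  ∑' j : ℤ, (((ξ - 2 * Real.pi * j) ^ 2 + α ^ 2) ^ k)⁻¹

noncomputable def Lhat (α : ℝ) (k : ℕ) (ξ : ℝ) : ℝ :=
  (Real.sqrt (2 * Real.pi))⁻¹ * ((ξ ^ 2 + α ^ 2) ^ k)⁻¹ / S α k ξ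

noncomputable def Lk (α : ℝ) (k : ℕ) (x : ℝ) : ℝ :=
  (((Real.sqrt (2 * Real.pi) : ℂ))⁻¹ *
    ∫ ξ : ℝ, (Lhat α k ξ : ℂ) * Complex.exp (Complex.I * x * ξ)).re

noncomputable def Phihat (α : ℝ) (k : ℕ) (ξ : ℝ) : ℝ :=
  (-1 : ℝ) ^ k * (Real.sqrt (2 * Real.pi))⁻¹ / S α k ξ

noncomputable def acoef (α : ℝ) (k : ℕ) (j : ℤ) : ℂ :=
  ((Real.sqrt (2 * Real.pi) : ℂ))⁻¹ *
    ∫ ξ in (-Real.pi)..Real.pi, (Phihat α k ξ : ℂ) * Complex.exp (Complex.I * j * ξ)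


open Set


noncomputable def Fc (α : ℝ) (k : ℕ) (z : ℂ) : ℂ :=
  ∑' j : ℤ, (((z - 2 * Real.pi * j) ^ 2 + (α : ℂ) ^ 2) ^ k)⁻¹


lemma Fc_ofReal (α : ℝ) (k : ℕ) (ξ : ℝ) : Fc α k ξ = (S α k ξ : ℂ) := by
  rw [S, Complex.ofReal_tsum, Fc]
  congr 1; funext j; push_cast; ring

lemma den_ne_zero {α : ℝ} (hα : 0 < α) {z : ℂ} (hz : |z.im| < α) (j : ℤ) :
    (z - 2 * Real.pi * j) ^ 2 + (α : ℂ) ^ 2 ≠ 0 := by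
  intro h
  set w : ℂ := z - 2 * Real.pi * j with hw
  have hwim : w.im = z.im := by simp [hw]
  have hre : w.re ^ 2 - w.im ^ 2 + α ^ 2 = 0 := by
    have := congrArg Complex.re h
    simpa [pow_two, Complex.mul_re, Complex.add_re] using this
  have him : w.re * w.im = 0 := by
    have := congrArg Complex.im h
    simp [pow_two, Complex.mul_im, Complex.add_im] at this
    linarith
  have hzlt := abs_lt.1 hz
  rcases mul_eq_zero.1 him with h1 | h2
  · rw [h1] at hre
    rw [hwim] at hre
    nlinarith [hzlt.1, hzlt.2]
  · rw [h2] at hre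
    nlinarith [sq_nonneg w.re]

/-- real part of the denominator -/
lemma den_re (α : ℝ) (z : ℂ) (j : ℤ) :
    ((z - 2 * Real.pi * j) ^ 2 + (α : ℂ) ^ 2).re
      = (z.re - 2 * Real.pi * j) ^ 2 - z.im ^ 2 + α ^ 2 := by
  simp [pow_two, Complex.mul_re, Complex.add_re, Complex.sub_re, Complex.sub_im]

lemma term_norm_le {α : ℝ} (hα : 0 < α) (k : ℕ) {z : ℂ} (hz : |z.im| ≤ α / 2) (j : ℤ) :
    ‖(((z - 2 * Real.pi * j) ^ 2 + (α : ℂ) ^ 2) ^ k)⁻¹‖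
      ≤ (((z.re - 2 * Real.pi * j) ^ 2 + 3 / 4 * α ^ 2) ^ k)⁻¹ := by
  have hz2 : z.im ^ 2 ≤ α ^ 2 / 4 := by
    have h1 := abs_le.1 hz
    nlinarith [h1.1, h1.2]
  have hbase : (z.re - 2 * Real.pi * j) ^ 2 + 3 / 4 * α ^ 2
      ≤ ‖(z - 2 * Real.pi * j) ^ 2 + (α : ℂ) ^ 2‖ := by
    have := Complex.abs_re_le_norm ((z - 2 * Real.pi * j) ^ 2 + (α : ℂ) ^ 2)
    rw [den_re] at this
    have h2 : (z.re - 2 * Real.pi * j) ^ 2 + 3 / 4 * α ^ 2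
        ≤ (z.re - 2 * Real.pi * j) ^ 2 - z.im ^ 2 + α ^ 2 := by nlinarith
    calc (z.re - 2 * Real.pi * j) ^ 2 + 3 / 4 * α ^ 2
        ≤ (z.re - 2 * Real.pi * j) ^ 2 - z.im ^ 2 + α ^ 2 := h2
      _ ≤ |(z.re - 2 * Real.pi * j) ^ 2 - z.im ^ 2 + α ^ 2| := le_abs_self _
      _ ≤ _ := this
  have hpos : 0 < (z.re - 2 * Real.pi * j) ^ 2 + 3 / 4 * α ^ 2 := by positivity
  rw [norm_inv, norm_pow]
  exact inv_anti₀ (by positivity) (pow_le_pow_left₀ (le_of_lt hpos) hbase k)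

noncomputable def ubnd (α : ℝ) (k : ℕ) (j : ℤ) : ℝ :=
  ((max (2 * |(j : ℝ)| - 4) 0 ^ 2 + 3 / 4 * α ^ 2) ^ k)⁻¹

lemma ubnd_summable {α : ℝ} (hα : 0 < α) {k : ℕ} (hk : 1 ≤ k) :
    Summable (ubnd α k) := by
  set B : ℝ := ((3 / 4 * α ^ 2) ^ k)⁻¹ with hB
  have hBpos : 0 < B := by positivity
  have hsum : Summable (fun j : ℤ =>
      25 / 4 * (1 / (j : ℝ) ^ 2) + (if |j| ≤ 2 then B else 0)) := by
    apply Summable.add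
    · exact (Real.summable_one_div_int_pow.2 one_lt_two).mul_left _
    · apply summable_of_finite_support
      apply Set.Finite.subset (Set.finite_Icc (-2 : ℤ) 2)
      intro j hj
      simp only [Function.mem_support] at hj
      by_contra hmem
      simp only [Set.mem_Icc, not_and_or, not_le] at hmem
      have : ¬ |j| ≤ 2 := by rw [abs_le]; omega
      simp [this] at hj
  apply Summable.of_nonneg_of_le _ _ hsum
  · intro j; rw [ubnd]; positivity
  · intro j
    by_cases hj : |j| ≤ 2
    · have hjr : |(j : ℝ)| ≤ 2 := by
        rw [← Int.cast_abs]; exact_mod_cast hj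
      have hmax : max (2 * |(j : ℝ)| - 4) 0 = 0 := max_eq_right (by linarith)
      have h0 : 0 ≤ 25 / 4 * (1 / (j : ℝ) ^ 2) := by positivity
      rw [ubnd, hmax]
      simp only [if_pos hj]
      have : ((0:ℝ) ^ 2 + 3 / 4 * α ^ 2) ^ k = (3 / 4 * α ^ 2) ^ k := by norm_num
      rw [this, ← hB]
      linarith
    · have hj3 : (3 : ℝ) ≤ |(j : ℝ)| := by
        rw [← Int.cast_abs]
        have : (3 : ℤ) ≤ |j| := by omega
        exact_mod_cast this
      have hmax : max (2 * |(j : ℝ)| - 4) 0 = 2 * |(j : ℝ)| - 4 :=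
        max_eq_left (by linarith)
      have hbase1 : (1 : ℝ) ≤ (2 * |(j : ℝ)| - 4) ^ 2 + 3 / 4 * α ^ 2 := by nlinarith
      have hfirst : ubnd α k j ≤ ((2 * |(j : ℝ)| - 4) ^ 2 + 3 / 4 * α ^ 2)⁻¹ := by
        rw [ubnd, hmax]
        apply inv_anti₀ (by nlinarith)
        calc (2 * |(j : ℝ)| - 4) ^ 2 + 3 / 4 * α ^ 2
            = ((2 * |(j : ℝ)| - 4) ^ 2 + 3 / 4 * α ^ 2) ^ 1 := (pow_one _).symm
          _ ≤ _ := pow_le_pow_right₀ hbase1 hk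
      have hj0 : (j : ℝ) ≠ 0 := by
        intro h0; rw [h0] at hj3; simp at hj3; linarith
      have hjne : (j : ℝ) ^ 2 > 0 := by positivity
      have hsecond : ((2 * |(j : ℝ)| - 4) ^ 2 + 3 / 4 * α ^ 2)⁻¹
          ≤ 25 / 4 * (1 / (j : ℝ) ^ 2) := by
        have hle : 4 / 25 * (j : ℝ) ^ 2 ≤ (2 * |(j : ℝ)| - 4) ^ 2 + 3 / 4 * α ^ 2 := by
          have habs : |(j : ℝ)| ^ 2 = (j : ℝ) ^ 2 := sq_abs _
          nlinarith
        have := inv_anti₀ (by positivity) hle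
        calc ((2 * |(j : ℝ)| - 4) ^ 2 + 3 / 4 * α ^ 2)⁻¹
            ≤ (4 / 25 * (j : ℝ) ^ 2)⁻¹ := this
          _ = 25 / 4 * (1 / (j : ℝ) ^ 2) := by field_simp
      calc ubnd α k j ≤ 25 / 4 * (1 / (j : ℝ) ^ 2) := hfirst.trans hsecond
        _ ≤ _ := by simp [if_neg hj]

def Ust (α : ℝ) : Set ℂ := {z : ℂ | |z.re| < 4 ∧ |z.im| < α / 2}

lemma Ust_open (α : ℝ) : IsOpen (Ust α) := by
  have h1 : IsOpen {z : ℂ | |z.re| < 4} :=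
    isOpen_lt (continuous_abs.comp Complex.continuous_re) continuous_const
  have h2 : IsOpen {z : ℂ | |z.im| < α / 2} :=
    isOpen_lt (continuous_abs.comp Complex.continuous_im) continuous_const
  exact h1.inter h2

lemma term_le_ubnd {α : ℝ} (hα : 0 < α) (k : ℕ) (j : ℤ) {z : ℂ} (hz : z ∈ Ust α) :
    ‖(((z - 2 * Real.pi * j) ^ 2 + (α : ℂ) ^ 2) ^ k)⁻¹‖ ≤ ubnd α k j := by
  obtain ⟨hre, him⟩ := hz
  refine (term_norm_le hα k (le_of_lt him) j).trans ?_
  rw [ubnd]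
  apply inv_anti₀ (by positivity)
  apply pow_le_pow_left₀ (by positivity)
  apply add_le_add_left
  rw [← sq_abs (z.re - 2 * Real.pi * j)]
  apply pow_le_pow_left₀ (le_max_right _ _)
  apply max_le _ (abs_nonneg _)
  rcases le_or_gt (2 * |(j : ℝ)| - 4) 0 with h | h
  · exact h.trans (abs_nonneg _)
  · have hpi : (3 : ℝ) < Real.pi := Real.pi_gt_three
    have habsj : 2 * Real.pi * |(j : ℝ)| - 4 ≤ |z.re - 2 * Real.pi * j| := by
      have h1 : |2 * Real.pi * (j:ℝ)| = 2 * Real.pi * |(j:ℝ)| := by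
        rw [abs_mul, abs_of_nonneg (by positivity : (0:ℝ) ≤ 2 * Real.pi)]
      have h2 : |2 * Real.pi * (j:ℝ)| - |z.re| ≤ |z.re - 2 * Real.pi * j| := by
        rw [abs_sub_comm]
        exact abs_sub_abs_le_abs_sub _ _
      linarith
    have : 2 * |(j : ℝ)| - 4 ≤ 2 * Real.pi * |(j:ℝ)| - 4 := by
      nlinarith [abs_nonneg ((j:ℝ))]
    linarith

lemma Fc_diffOn {α : ℝ} (hα : 0 < α) {k : ℕ} (hk : 1 ≤ k) :
    DifferentiableOn ℂ (Fc α k) (Ust α) := by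
  have : DifferentiableOn ℂ
      (fun z : ℂ => ∑' j : ℤ, (((z - 2 * Real.pi * j) ^ 2 + (α : ℂ) ^ 2) ^ k)⁻¹)
      (Ust α) := by
    apply Complex.differentiableOn_tsum_of_summable_norm (ubnd_summable hα hk) _ (Ust_open α)
      (fun j w hw => term_le_ubnd hα k j hw)
    intro j
    intro z hz
    apply DifferentiableAt.differentiableWithinAt
    have hne : ((z - 2 * Real.pi * j) ^ 2 + (α : ℂ) ^ 2) ^ k ≠ 0 := by
      apply pow_ne_zero
      exact den_ne_zero hα (lt_of_lt_of_le hz.2 (by linarith)) j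
    exact DifferentiableAt.inv
      ((((differentiableAt_id.sub (differentiableAt_const _)).pow 2).add
        (differentiableAt_const _)).pow k) hne
  exact this

lemma Fc_periodic (α : ℝ) (k : ℕ) (z : ℂ) : Fc α k (z + 2 * Real.pi) = Fc α k z := by
  rw [Fc, Fc]
  have := (Equiv.subRight (1 : ℤ)).tsum_eq
    (fun j : ℤ => (((z - 2 * Real.pi * j) ^ 2 + (α : ℂ) ^ 2) ^ k)⁻¹)
  rw [← this]
  congr 1; funext j
  simp only [Equiv.subRight_apply]
  push_cast
  ring_nf

lemma S_summable {α : ℝ} (hα : 0 < α) {k : ℕ} (hk : 1 ≤ k) {ξ : ℝ} (hξ : |ξ| < 4) :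
    Summable (fun j : ℤ => (((ξ - 2 * Real.pi * j) ^ 2 + α ^ 2) ^ k)⁻¹) := by
  apply Summable.of_nonneg_of_le (fun j => by positivity)
    (fun j => ?_) (ubnd_summable hα hk)
  have hz : (ξ : ℂ) ∈ Ust α := by
    constructor <;> simp [abs_of_nonneg, hξ]
    · linarith
  have := term_le_ubnd hα k j hz
  have hcast : ((((ξ : ℂ) - 2 * Real.pi * j) ^ 2 + (α : ℂ) ^ 2) ^ k)⁻¹
      = (((((ξ - 2 * Real.pi * j) ^ 2 + α ^ 2) ^ k)⁻¹ : ℝ) : ℂ) := by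
    push_cast; ring
  rw [hcast] at this
  rw [Complex.norm_real] at this
  calc (((ξ - 2 * Real.pi * j) ^ 2 + α ^ 2) ^ k)⁻¹
      ≤ ‖(((ξ - 2 * Real.pi * j) ^ 2 + α ^ 2) ^ k)⁻¹‖ := le_abs_self _
    _ ≤ _ := this

lemma S_pos {α : ℝ} (hα : 0 < α) {k : ℕ} (hk : 1 ≤ k) {ξ : ℝ} (hξ : |ξ| < 4) :
    0 < S α k ξ := by
  rw [S]
  apply Summable.tsum_pos (S_summable hα hk hξ) (fun j => by positivity) 0
  positivity

lemma exists_strip {α : ℝ} (hα : 0 < α) {k : ℕ} (hk : 1 ≤ k) :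
    ∃ c : ℝ, 0 < c ∧ c ≤ α / 4 ∧
      ∀ z : ℂ, |z.re| ≤ Real.pi → |z.im| ≤ c → Fc α k z ≠ 0 := by
  have hpi4 : Real.pi < 4 := by
    have := Real.pi_lt_d2; linarith
  set K : Set ℂ := {z : ℂ | |z.re| ≤ Real.pi ∧ |z.im| ≤ α / 4} with hK
  have hKsub : K ⊆ Ust α := by
    intro z hz
    exact ⟨lt_of_le_of_lt hz.1 hpi4, lt_of_le_of_lt hz.2 (by linarith)⟩
  have hKclosed : IsClosed K := by
    have h1 : IsClosed {z : ℂ | |z.re| ≤ Real.pi} :=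
      isClosed_le (continuous_abs.comp Complex.continuous_re) continuous_const
    have h2 : IsClosed {z : ℂ | |z.im| ≤ α / 4} :=
      isClosed_le (continuous_abs.comp Complex.continuous_im) continuous_const
    exact h1.inter h2
  have hKcompact : IsCompact K := by
    apply Metric.isCompact_of_isClosed_isBounded hKclosed
    rw [isBounded_iff_forall_norm_le]
    refine ⟨Real.pi + α, fun z hz => ?_⟩
    calc ‖z‖ ≤ |z.re| + |z.im| := Complex.norm_le_abs_re_add_abs_im z
      _ ≤ Real.pi + α := by
        have h1 := hz.1; have h2 := hz.2; linarith
  have hcont : ContinuousOn (Fc α k) K :=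
    ((Fc_diffOn hα hk).continuousOn).mono hKsub
  set Z : Set ℂ := K ∩ (Fc α k) ⁻¹' {0} with hZ
  have hZclosed : IsClosed Z :=
    hcont.preimage_isClosed_of_isClosed hKclosed isClosed_singleton
  have hZcompact : IsCompact Z :=
    hKcompact.of_isClosed_subset hZclosed Set.inter_subset_left
  have hreal : ∀ z ∈ Z, z.im ≠ 0 := by
    intro z hz h0
    have hzre : z = ((z.re : ℝ) : ℂ) := Complex.ext rfl (by simp [h0])
    have h1 : Fc α k z = 0 := hz.2
    rw [hzre, Fc_ofReal] at h1
    have h2 : |z.re| < 4 := lt_of_le_of_lt hz.1.1 hpi4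
    have := S_pos hα hk h2
    rw [Complex.ofReal_eq_zero] at h1
    linarith
  by_cases hne : Z.Nonempty
  · obtain ⟨z₀, hz₀, hmin⟩ := hZcompact.exists_isMinOn hne
      ((continuous_abs.comp Complex.continuous_im).continuousOn)
    set m : ℝ := |z₀.im| with hm
    have hmpos : 0 < m := abs_pos.2 (hreal z₀ hz₀)
    refine ⟨min (m / 2) (α / 4), by positivity, min_le_right _ _, ?_⟩
    intro z hzre hzim h0
    have hzK : z ∈ K := ⟨hzre, hzim.trans (min_le_right _ _)⟩
    have hzZ : z ∈ Z := ⟨hzK, h0⟩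
    have := hmin hzZ
    simp only [Function.comp_apply] at this
    have : m ≤ |z.im| := this
    have : |z.im| ≤ m / 2 := hzim.trans (min_le_left _ _)
    linarith
  · refine ⟨α / 4, by positivity, le_refl _, ?_⟩
    intro z hzre hzim h0
    exact hne ⟨z, ⟨hzre, hzim⟩, h0⟩


/-- The Fourier coefficients of Φ̂ₖ decay exponentially. -/
theorem stmt_2 (α : ℝ) (hα : 0 < α) (k : ℕ) (hk : 1 ≤ k) :
    ∃ c > (0 : ℝ), ∃ C > (0 : ℝ), ∀ j : ℤ,
      ‖acoef α k j‖ ≤ C * Real.exp (-c * |(j : ℝ)|) := by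
  obtain ⟨c, hc, hcα, hne⟩ := exists_strip hα hk
  have hpi : (0:ℝ) < Real.pi := Real.pi_pos
  have hpi4 : Real.pi < 4 := by have := Real.pi_lt_d2; linarith
  have hsq : (0:ℝ) < Real.sqrt (2 * Real.pi) := Real.sqrt_pos.2 (by positivity)
  set A : ℂ := (-1 : ℂ) ^ k * ((Real.sqrt (2 * Real.pi) : ℂ))⁻¹ with hA
  set g : ℂ → ℂ := fun z => A / Fc α k z with hg
  set R : Set ℂ := {z : ℂ | |z.re| ≤ Real.pi ∧ |z.im| ≤ c} with hR
  have hRsubU : R ⊆ Ust α := fun z hz =>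
    ⟨lt_of_le_of_lt hz.1 hpi4, lt_of_le_of_lt (hz.2.trans hcα) (by linarith)⟩
  have hFcAt : ∀ z ∈ R, DifferentiableAt ℂ (Fc α k) z := fun z hz =>
    (Fc_diffOn hα hk).differentiableAt ((Ust_open α).mem_nhds (hRsubU hz))
  have hgAt : ∀ z ∈ R, DifferentiableAt ℂ g z := fun z hz =>
    (differentiableAt_const A).div (hFcAt z hz) (hne z hz.1 hz.2)
  have hgcont : ContinuousOn g R := fun z hz =>
    ((hgAt z hz).continuousAt).continuousWithinAt
  have hRclosed : IsClosed R := by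
    have h1 : IsClosed {z : ℂ | |z.re| ≤ Real.pi} :=
      isClosed_le (continuous_abs.comp Complex.continuous_re) continuous_const
    have h2 : IsClosed {z : ℂ | |z.im| ≤ c} :=
      isClosed_le (continuous_abs.comp Complex.continuous_im) continuous_const
    exact h1.inter h2
  have hRcompact : IsCompact R := by
    apply Metric.isCompact_of_isClosed_isBounded hRclosed
    rw [isBounded_iff_forall_norm_le]
    refine ⟨Real.pi + c, fun z hz => ?_⟩
    calc ‖z‖ ≤ |z.re| + |z.im| := Complex.norm_le_abs_re_add_abs_im z
      _ ≤ Real.pi + c := add_le_add hz.1 hz.2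
  obtain ⟨M, hM⟩ := hRcompact.exists_bound_of_continuousOn hgcont
  set M' : ℝ := max M 1 with hM'
  have hM'1 : (1:ℝ) ≤ M' := le_max_right _ _
  have hM'bound : ∀ z ∈ R, ‖g z‖ ≤ M' := fun z hz => (hM z hz).trans (le_max_left _ _)
  refine ⟨c, hc, (Real.sqrt (2 * Real.pi))⁻¹ * M' * (2 * Real.pi),
    by positivity, fun j => ?_⟩
  set d : ℝ := if 0 ≤ j then c else -c with hd
  have hdabs : |d| = c := by
    rcases le_or_gt 0 j with h | h
    · simp [hd, if_pos h, abs_of_pos hc]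
    · simp [hd, if_neg (not_le.2 h), abs_of_pos hc]
  have hjd : (j : ℝ) * d = |(j : ℝ)| * c := by
    rcases le_or_gt 0 j with h | h
    · rw [hd, if_pos h, abs_of_nonneg (by exact_mod_cast h : (0:ℝ) ≤ (j:ℝ))]
    · rw [hd, if_neg (not_le.2 h),
        abs_of_neg (by exact_mod_cast h : (j:ℝ) < 0)]
      ring
  set h : ℂ → ℂ := fun z => g z * Complex.exp (Complex.I * j * z) with hh
  -- periodicity of h
  have hgper : ∀ w : ℂ, g (w + 2 * Real.pi) = g w := fun w => by
    simp only [hg, Fc_periodic]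
  have hper : ∀ w : ℂ, h (w + 2 * Real.pi) = h w := by
    intro w
    simp only [hh]
    rw [hgper]
    congr 1
    have harg : Complex.I * j * (w + 2 * Real.pi)
        = Complex.I * j * w + (j : ℂ) * (2 * Real.pi * Complex.I) := by ring
    rw [harg, Complex.exp_add, Complex.exp_int_mul_two_pi_mul_I, mul_one]
  -- differentiability on the rectangle
  have hRect : ∀ d' : ℝ, |d'| ≤ c →
      DifferentiableOn ℂ h (Set.uIcc (-Real.pi) Real.pi ×ℂ Set.uIcc 0 d') := by
    intro d' hd' z hz
    have hzR : z ∈ R := by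
      obtain ⟨hz1, hz2⟩ := hz
      constructor
      · rw [Set.uIcc_of_le (by linarith : -Real.pi ≤ Real.pi)] at hz1
        exact abs_le.2 ⟨hz1.1, hz1.2⟩
      · have h1 := Set.mem_uIcc.1 hz2
        have hd'1 := abs_le.1 hd'
        apply abs_le.2
        rcases h1 with ⟨ha, hb⟩ | ⟨ha, hb⟩ <;> constructor <;> linarith
    apply DifferentiableAt.differentiableWithinAt
    exact (hgAt z hzR).mul ((Complex.differentiable_exp _).comp z
      ((differentiable_id.const_mul (Complex.I * (j : ℂ))).differentiableAt))
  -- the contour identity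
  have hcontour : (∫ x in (-Real.pi)..Real.pi, h (x + (0:ℝ) * Complex.I))
      = ∫ x in (-Real.pi)..Real.pi, h (x + d * Complex.I) := by
    have := Complex.integral_boundary_rect_eq_zero_of_differentiableOn h
      ((-Real.pi : ℝ) : ℂ) ((Real.pi : ℝ) + d * Complex.I) ?_
    · have hre1 : ((-Real.pi : ℝ) : ℂ).re = -Real.pi := by simp
      have hre2 : (((Real.pi : ℝ) : ℂ) + d * Complex.I).re = Real.pi := by simp
      have him1 : ((-Real.pi : ℝ) : ℂ).im = 0 := by simp
      have him2 : (((Real.pi : ℝ) : ℂ) + d * Complex.I).im = d := by simp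
      rw [hre1, hre2, him1, him2] at this
      simp only [Complex.ofReal_neg, smul_eq_mul] at this
      have hside : (∫ y in (0:ℝ)..d, h (-(Real.pi:ℂ) + y * Complex.I + 2 * Real.pi))
          = ∫ y in (0:ℝ)..d, h (-(Real.pi:ℂ) + y * Complex.I) := by
        apply intervalIntegral.integral_congr
        intro y _
        show h (-(Real.pi:ℂ) + y * Complex.I + 2 * Real.pi)
            = h (-(Real.pi:ℂ) + y * Complex.I)
        rw [hper]
      have hπeq : ∀ y : ℝ, (Real.pi:ℂ) + (y:ℂ) * Complex.I
          = -(Real.pi:ℂ) + y * Complex.I + 2 * Real.pi := by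
        intro y; ring
      have hside2 : (∫ y in (0:ℝ)..d, h ((Real.pi:ℂ) + y * Complex.I))
          = ∫ y in (0:ℝ)..d, h (-(Real.pi:ℂ) + y * Complex.I) := by
        rw [← hside]
        apply intervalIntegral.integral_congr
        intro y _
        show h ((Real.pi:ℂ) + y * Complex.I)
            = h (-(Real.pi:ℂ) + y * Complex.I + 2 * Real.pi)
        rw [hπeq y]
      rw [hside2] at this
      have h2 : (∫ x in (-Real.pi)..Real.pi, h (x + ((0:ℝ):ℂ) * Complex.I))
          - (∫ x in (-Real.pi)..Real.pi, h (x + (d:ℂ) * Complex.I)) = 0 := by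
        linear_combination this
      exact sub_eq_zero.mp h2
    · have hre1 : ((-Real.pi : ℝ) : ℂ).re = -Real.pi := by simp
      have hre2 : (((Real.pi : ℝ) : ℂ) + d * Complex.I).re = Real.pi := by simp
      have him1 : ((-Real.pi : ℝ) : ℂ).im = 0 := by simp
      have him2 : (((Real.pi : ℝ) : ℂ) + d * Complex.I).im = d := by simp
      rw [hre1, hre2, him1, him2]
      exact hRect d hdabs.le
  -- identify acoef with the bottom integral
  have hacoef : acoef α k j = ((Real.sqrt (2 * Real.pi) : ℂ))⁻¹ *
      ∫ x in (-Real.pi)..Real.pi, h (x + (0:ℝ) * Complex.I) := by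
    rw [acoef]
    congr 1
    apply intervalIntegral.integral_congr
    intro ξ _
    have h0 : ((ξ:ℂ) + ((0:ℝ):ℂ) * Complex.I) = (ξ : ℂ) := by simp
    show (Phihat α k ξ : ℂ) * Complex.exp (Complex.I * j * ξ)
        = h ((ξ:ℂ) + ((0:ℝ):ℂ) * Complex.I)
    rw [h0, hh]
    simp only
    congr 1
    rw [hg]
    simp only
    rw [Fc_ofReal, Phihat, hA]
    push_cast
    ring
  -- bound the top integral
  have htopbound : ‖∫ x in (-Real.pi)..Real.pi, h (x + d * Complex.I)‖
      ≤ M' * Real.exp (-c * |(j:ℝ)|) * (2 * Real.pi) := by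
    have hb := intervalIntegral.norm_integral_le_of_norm_le_const
      (C := M' * Real.exp (-c * |(j:ℝ)|))
      (f := fun x : ℝ => h (x + d * Complex.I)) (a := -Real.pi) (b := Real.pi) ?_
    · calc ‖∫ x in (-Real.pi)..Real.pi, h (x + d * Complex.I)‖
          ≤ M' * Real.exp (-c * |(j:ℝ)|) * |Real.pi - -Real.pi| := hb
        _ = M' * Real.exp (-c * |(j:ℝ)|) * (2 * Real.pi) := by
            rw [abs_of_pos (by linarith : (0:ℝ) < Real.pi - -Real.pi)]; ring
    · intro x hx
      rw [Set.uIoc_of_le (by linarith : -Real.pi ≤ Real.pi)] at hx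
      have hxR : ((x:ℂ) + d * Complex.I) ∈ R := by
        constructor
        · simp only [Complex.add_re, Complex.ofReal_re, Complex.mul_re,
            Complex.ofReal_im, Complex.I_re, Complex.I_im]
          simp
          exact abs_le.2 ⟨hx.1.le, hx.2⟩
        · simp only [Complex.add_im, Complex.ofReal_im, Complex.mul_im,
            Complex.ofReal_re, Complex.I_im, Complex.I_re]
          simp
          rw [hdabs]
      have hgb := hM'bound _ hxR
      have hexp : ‖Complex.exp (Complex.I * j * ((x:ℂ) + d * Complex.I))‖
          = Real.exp (-c * |(j:ℝ)|) := by
        have harg : Complex.I * j * ((x:ℂ) + d * Complex.I)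
            = ((-( (j:ℝ) * d) : ℝ) : ℂ) + (((j:ℝ) * x : ℝ) : ℂ) * Complex.I := by
          push_cast
          linear_combination ((j:ℂ) * (d:ℂ)) * Complex.I_sq
        rw [harg, Complex.norm_exp]
        have hre : (((-( (j:ℝ) * d) : ℝ) : ℂ) + (((j:ℝ) * x : ℝ) : ℂ) * Complex.I).re
            = -((j:ℝ) * d) := by simp
        rw [hre, hjd]
        ring_nf
      calc ‖h ((x:ℂ) + d * Complex.I)‖
          = ‖g ((x:ℂ) + d * Complex.I)‖ *
            ‖Complex.exp (Complex.I * j * ((x:ℂ) + d * Complex.I))‖ := norm_mul _ _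
        _ ≤ M' * Real.exp (-c * |(j:ℝ)|) := by
            rw [hexp]
            exact mul_le_mul_of_nonneg_right hgb (Real.exp_nonneg _)
  -- conclude
  rw [hacoef, hcontour]
  rw [norm_mul, norm_inv, Complex.norm_real, Real.norm_eq_abs,
    abs_of_pos hsq]
  calc (Real.sqrt (2 * Real.pi))⁻¹ * ‖∫ x in (-Real.pi)..Real.pi, h (x + d * Complex.I)‖
      ≤ (Real.sqrt (2 * Real.pi))⁻¹ * (M' * Real.exp (-c * |(j:ℝ)|) * (2 * Real.pi)) := by
        apply mul_le_mul_of_nonneg_left htopbound (by positivity)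
    _ = (Real.sqrt (2 * Real.pi))⁻¹ * M' * (2 * Real.pi) * Real.exp (-c * |(j:ℝ)|) := by
        ring
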